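/- arXiv:1006.5558 — 4 statements merged into one kernel-verified Lean document; each statement's English description precedes it below -/
import Mathlib

section
/- Let f : (0, r₀] → ℝ be continuous with f(r) = O(r²) as r → 0⁺ (i.e. there is C with |f(r)| ≤ C r² for r ∈ (0, r₀]). Then any C¹ solution y : (0, r₁] → ℝ (0 < r₁ ≤ r₀) of the Riccati-type equation y′(r) = 1 + f(r) y(r)², which remains bounded as r → 0⁺ and satisfies y(r) → 0 as r → 0⁺, satisfies y(r) = r + O(r⁵) as r → 0⁺, i.e. |y(r) − r| ≤ C′ r⁵ on some interval (0, r₂]. -/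
open Set

lemma mono_aux (a b : ℝ) (hab : a ≤ b) (h h' : ℝ → ℝ)
    (hd : ∀ x ∈ Icc a b, HasDerivAt h (h' x) x)
    (hpos : ∀ x ∈ Icc a b, 0 ≤ h' x) : h a ≤ h b := by
  have hmono : MonotoneOn h (Icc a b) := by
    apply monotoneOn_of_deriv_nonneg (convex_Icc a b)
    · exact fun x hx => (hd x hx).continuousAt.continuousWithinAt
    · intro x hx
      rw [interior_Icc] at hx
      exact ((hd x (Ioo_subset_Icc_self hx)).differentiableAt).differentiableWithinAt
    · intro x hx
      rw [interior_Icc] at hx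
      rw [(hd x (Ioo_subset_Icc_self hx)).deriv]
      exact hpos x (Ioo_subset_Icc_self hx)
  exact hmono (left_mem_Icc.2 hab) (right_mem_Icc.2 hab) hab

lemma key (r₁ : ℝ) (y g : ℝ → ℝ)
    (hy : ∀ r ∈ Ioc (0:ℝ) r₁, HasDerivAt y (g r) r)
    (hlim : Filter.Tendsto y (nhdsWithin 0 (Ioi 0)) (nhds 0))
    (K : ℝ) (k : ℕ) (r₂ : ℝ) (hr₂ : r₂ ≤ r₁)
    (hg : ∀ r ∈ Ioc (0:ℝ) r₂, |g r - 1| ≤ K * r ^ k) :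
    ∀ r ∈ Ioc (0:ℝ) r₂, |y r - r| ≤ K / (k + 1) * r ^ (k + 1) := by
  intro r hr
  obtain ⟨hr0, hrr₂⟩ := hr
  have hK : 0 ≤ K := by
    have h1 := hg r ⟨hr0, hrr₂⟩
    have h2 : (0:ℝ) ≤ K * r ^ k := le_trans (abs_nonneg _) h1
    have hrk : (0:ℝ) < r ^ k := pow_pos hr0 k
    have := div_nonneg h2 hrk.le
    rwa [mul_div_assoc, div_self hrk.ne', mul_one] at this
  have hk1 : (0:ℝ) < (k:ℝ) + 1 := by positivity
  set F : ℝ → ℝ := fun s => K / ((k:ℝ) + 1) * s ^ (k + 1) with hF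
  have hFd : ∀ s : ℝ, HasDerivAt F (K * s ^ k) s := by
    intro s
    have h := (hasDerivAt_pow (k + 1) s).const_mul (K / ((k:ℝ) + 1))
    convert h using 1
    · rfl
    · rfl
    push_cast
    field_simp
  have hstep : ∀ ε ∈ Ioc (0:ℝ) r, |y r - r| ≤ F r + |y ε - ε| := by
    intro ε hε
    have hεr : ε ≤ r := hε.2
    have hsub : Icc ε r ⊆ Ioc 0 r₁ := fun x hx =>
      ⟨lt_of_lt_of_le hε.1 hx.1, le_trans hx.2 (le_trans hrr₂ hr₂)⟩
    have hsub2 : Icc ε r ⊆ Ioc 0 r₂ := fun x hx =>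
      ⟨lt_of_lt_of_le hε.1 hx.1, le_trans hx.2 hrr₂⟩
    have h1 : F ε - (y ε - ε) ≤ F r - (y r - r) := by
      apply mono_aux ε r hεr _ (fun s => K * s ^ k - (g s - 1))
      · intro x hx
        exact (hFd x).sub ((hy x (hsub hx)).sub (hasDerivAt_id x))
      · intro x hx
        have := abs_le.1 (hg x (hsub2 hx))
        linarith [this.2]
    have h2 : F ε + (y ε - ε) ≤ F r + (y r - r) := by
      apply mono_aux ε r hεr _ (fun s => K * s ^ k + (g s - 1))
      · intro x hx
        exact (hFd x).add ((hy x (hsub hx)).sub (hasDerivAt_id x))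
      · intro x hx
        have := abs_le.1 (hg x (hsub2 hx))
        linarith [this.1]
    have hFε : 0 ≤ F ε := by
      have hε0 : 0 ≤ ε := le_of_lt hε.1
      have : 0 ≤ ε ^ (k + 1) := pow_nonneg hε0 _
      positivity
    have habs := abs_le.1 (le_refl |y ε - ε|)
    rw [abs_sub_le_iff]
    refine ⟨?_, ?_⟩ <;>
      linarith [le_abs_self (y ε - ε), neg_abs_le (y ε - ε), hFε, h1, h2]
  have htends : Filter.Tendsto (fun ε => F r + |y ε - ε|) (nhdsWithin 0 (Ioi 0))
      (nhds (F r + 0)) := by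
    apply Filter.Tendsto.const_add
    have hid : Filter.Tendsto (fun ε : ℝ => ε) (nhdsWithin 0 (Ioi 0)) (nhds 0) :=
      Filter.tendsto_id.mono_left nhdsWithin_le_nhds
    have := (hlim.sub hid).abs
    simpa using this
  have hev : ∀ᶠ ε in nhdsWithin 0 (Ioi 0), |y r - r| ≤ F r + |y ε - ε| := by
    filter_upwards [Ioc_mem_nhdsGT_of_mem ⟨le_refl (0:ℝ), hr0⟩] with ε hε
    exact hstep ε hε
  have := ge_of_tendsto htends hev
  simpa using this

/-- Any bounded C¹ solution of the Riccati-type equation y′ = 1 + f y² with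
f = O(r²) near 0⁺, which tends to 0 at 0⁺, satisfies y = r + O(r⁵). -/
theorem stmt0 (r₀ : ℝ) (hr₀ : 0 < r₀) (f : ℝ → ℝ)
    (hf : ContinuousOn f (Ioc 0 r₀))
    (Cf : ℝ) (hfO : ∀ r ∈ Ioc (0:ℝ) r₀, |f r| ≤ Cf * r ^ 2)
    (r₁ : ℝ) (hr₁ : 0 < r₁) (hr₁₀ : r₁ ≤ r₀)
    (y : ℝ → ℝ)
    (hy : ∀ r ∈ Ioc (0:ℝ) r₁, HasDerivAt y (1 + f r * (y r) ^ 2) r)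
    (hyC1 : ContinuousOn (fun r => 1 + f r * (y r) ^ 2) (Ioc 0 r₁))
    (B : ℝ) (hbd : ∀ r ∈ Ioc (0:ℝ) r₁, |y r| ≤ B)
    (hlim : Filter.Tendsto y (nhdsWithin 0 (Ioi 0)) (nhds 0)) :
    ∃ r₂ C', 0 < r₂ ∧ r₂ ≤ r₁ ∧ ∀ r ∈ Ioc (0:ℝ) r₂, |y r - r| ≤ C' * r ^ 5 := by
  have hB : 0 ≤ B := le_trans (abs_nonneg _) (hbd r₁ ⟨hr₁, le_refl _⟩)
  have hCf : 0 ≤ Cf := by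
    have h1 := hfO r₀ ⟨hr₀, le_refl _⟩
    have h2 : (0:ℝ) ≤ Cf * r₀ ^ 2 := le_trans (abs_nonneg _) h1
    have hrk : (0:ℝ) < r₀ ^ 2 := pow_pos hr₀ 2
    have := div_nonneg h2 hrk.le
    rwa [mul_div_assoc, div_self hrk.ne', mul_one] at this
  set g : ℝ → ℝ := fun r => 1 + f r * (y r) ^ 2 with hg
  -- first estimate: |g r - 1| ≤ (Cf * B^2) * r^2 on (0, r₁]
  have hg1 : ∀ r ∈ Ioc (0:ℝ) r₁, |g r - 1| ≤ (Cf * B ^ 2) * r ^ 2 := by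
    intro r hr
    have hrI : r ∈ Ioc (0:ℝ) r₀ := ⟨hr.1, le_trans hr.2 hr₁₀⟩
    have h1 : |g r - 1| = |f r| * (y r) ^ 2 := by
      simp only [hg, add_sub_cancel_left, abs_mul, abs_of_nonneg (sq_nonneg (y r))]
    rw [h1]
    have h2 := hfO r hrI
    have h3 := hbd r hr
    have h4 : (y r) ^ 2 ≤ B ^ 2 := by
      have := abs_le.1 h3
      nlinarith [this.1, this.2]
    have h5 : (0:ℝ) ≤ r ^ 2 := sq_nonneg r
    nlinarith [abs_nonneg (f r), sq_nonneg (y r)]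
  have hkey1 := key r₁ y g hy hlim (Cf * B ^ 2) 2 r₁ (le_refl _) hg1
  set C₀ : ℝ := Cf * B ^ 2 / ((2:ℕ) + 1) with hC₀
  have hC₀0 : 0 ≤ C₀ := by positivity
  set r₂ : ℝ := min r₁ (1 / (1 + C₀)) with hr₂def
  have hr₂pos : 0 < r₂ := lt_min hr₁ (by positivity)
  have hr₂le : r₂ ≤ r₁ := min_le_left _ _
  -- second estimate: on (0, r₂], |y r| ≤ 2 r
  have hy2 : ∀ r ∈ Ioc (0:ℝ) r₂, |y r| ≤ 2 * r := by
    intro r hr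
    have hrI : r ∈ Ioc (0:ℝ) r₁ := ⟨hr.1, le_trans hr.2 hr₂le⟩
    have h1 := hkey1 r hrI
    have hrsmall : r ≤ 1 / (1 + C₀) := le_trans hr.2 (min_le_right _ _)
    have hC2 : C₀ * r ^ 2 ≤ 1 := by
      have h2 : r * (1 + C₀) ≤ 1 := by
        rw [← le_div_iff₀ (by positivity)]
        exact hrsmall
      nlinarith [hr.1, sq_nonneg (1 + C₀), sq_nonneg r]
    have h3 : |y r - r| ≤ C₀ * r ^ 3 := h1
    have h4 := abs_le.1 h3
    have h5 : C₀ * r ^ 3 ≤ r := by nlinarith [hr.1]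
    rw [abs_le]
    constructor <;> nlinarith [h4.1, h4.2, hr.1]
  have hg2 : ∀ r ∈ Ioc (0:ℝ) r₂, |g r - 1| ≤ (4 * Cf) * r ^ 4 := by
    intro r hr
    have hrI₀ : r ∈ Ioc (0:ℝ) r₀ := ⟨hr.1, le_trans hr.2 (le_trans hr₂le hr₁₀)⟩
    have h1 : |g r - 1| = |f r| * (y r) ^ 2 := by
      simp only [hg, add_sub_cancel_left, abs_mul, abs_of_nonneg (sq_nonneg (y r))]
    rw [h1]
    have h2 := hfO r hrI₀
    have h3 := hy2 r hr
    have h4 : (y r) ^ 2 ≤ (2 * r) ^ 2 := by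
      have := abs_le.1 h3
      nlinarith [this.1, this.2]
    nlinarith [abs_nonneg (f r), sq_nonneg (y r), sq_nonneg r, hr.1]
  have hkey2 := key r₁ y g hy hlim (4 * Cf) 4 r₂ hr₂le hg2
  refine ⟨r₂, 4 * Cf / ((4:ℕ) + 1), hr₂pos, hr₂le, ?_⟩
  intro r hr
  exact hkey2 r hr
end

section
/- Let n ≥ 2 and let τ : (0, r₀] → ℝ be continuous with τ(r) = (n−1)/r + O(r) as r → 0⁺. Let g : (0, r₀] → ℝ be continuous with g(r) = O(r) as r → 0⁺. Then there is a unique C¹ solution ξ : (0, r₀] → ℝ of ξ′(r) + τ(r) ξ(r) = g(r) that is bounded as r → 0⁺, and this solution satisfies ξ(r) = O(r²) as r → 0⁺. -/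
open Set MeasureTheory intervalIntegral

lemma ext_contOn (r₀ : ℝ) (τ : ℝ → ℝ) (hτc : ContinuousOn τ (Ioc 0 r₀)) :
    ContinuousOn (fun r => if r ≤ r₀ then τ r else τ r₀) (Ioi 0) := by
  apply ContinuousOn.if
  · intro a ha
    have : a = r₀ := by
      have := ha.2
      rw [show {a : ℝ | a ≤ r₀} = Iic r₀ from rfl, frontier_Iic] at this
      simpa using this
    simp [this]
  · have : Ioi 0 ∩ closure {a : ℝ | a ≤ r₀} = Ioc 0 r₀ := by
      rw [show {a : ℝ | a ≤ r₀} = Iic r₀ from rfl, closure_Iic]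
      ext x; simp [mem_Ioc, and_comm]
    rw [this]; exact hτc
  · exact continuousOn_const

/-- For τ = (n−1)/r + O(r) and g = O(r), there is a unique bounded C¹ solution of
ξ′ + τ ξ = g on (0,r₀], and it is O(r²). -/
theorem stmt1 (n : ℕ) (hn : 2 ≤ n) (r₀ : ℝ) (hr₀ : 0 < r₀)
    (τ g : ℝ → ℝ)
    (hτc : ContinuousOn τ (Ioc 0 r₀)) (hgc : ContinuousOn g (Ioc 0 r₀))
    (Cτ Cg : ℝ)
    (hτ : ∀ r ∈ Ioc (0:ℝ) r₀, |τ r - ((n:ℝ) - 1)/r| ≤ Cτ * r)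
    (hg : ∀ r ∈ Ioc (0:ℝ) r₀, |g r| ≤ Cg * r) :
    ∃ ξ : ℝ → ℝ,
      ((∀ r ∈ Ioc (0:ℝ) r₀, HasDerivAt ξ (g r - τ r * ξ r) r) ∧
        (∃ B, ∀ r ∈ Ioc (0:ℝ) r₀, |ξ r| ≤ B)) ∧
      (∃ C, ∀ r ∈ Ioc (0:ℝ) r₀, |ξ r| ≤ C * r ^ 2) ∧
      (∀ ξ' : ℝ → ℝ,
        ((∀ r ∈ Ioc (0:ℝ) r₀, HasDerivAt ξ' (g r - τ r * ξ' r) r) ∧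
          (∃ B, ∀ r ∈ Ioc (0:ℝ) r₀, |ξ' r| ≤ B)) →
        ∀ r ∈ Ioc (0:ℝ) r₀, ξ' r = ξ r) := by
  have hCτ0 : 0 ≤ Cτ := by
    have h1 := hτ r₀ ⟨hr₀, le_refl _⟩
    nlinarith [abs_nonneg (τ r₀ - ((n:ℝ)-1)/r₀)]
  have hCg0 : 0 ≤ Cg := by
    have h1 := hg r₀ ⟨hr₀, le_refl _⟩
    nlinarith [abs_nonneg (g r₀)]
  -- extensions
  set τe : ℝ → ℝ := fun r => if r ≤ r₀ then τ r else τ r₀ with hτedef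
  set ge : ℝ → ℝ := fun r => if r ≤ r₀ then g r else g r₀ with hgedef
  have hτeq : ∀ r ∈ Ioc (0:ℝ) r₀, τe r = τ r := fun r hr => if_pos hr.2
  have hgeq : ∀ r ∈ Ioc (0:ℝ) r₀, ge r = g r := fun r hr => if_pos hr.2
  have hτec : ContinuousOn τe (Ioi 0) := ext_contOn r₀ τ hτc
  have hgec : ContinuousOn ge (Ioi 0) := ext_contOn r₀ g hgc
  -- φ
  set φ : ℝ → ℝ := fun r => τe r - ((n:ℝ) - 1)/r with hφdef
  have hφc : ContinuousOn φ (Ioi 0) := by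
    apply hτec.sub
    exact continuousOn_const.div continuousOn_id (fun x hx => ne_of_gt hx)
  have hφb : ∀ r ∈ Ioc (0:ℝ) r₀, |φ r| ≤ Cτ * r := by
    intro r hr
    rw [hφdef]; simp only [hτeq r hr]; exact hτ r hr
  -- h
  set h : ℝ → ℝ := fun r => -∫ t in r₀..r, φ t with hhdef
  have hφint : ∀ r ∈ Ioi (0:ℝ), IntervalIntegrable φ volume r₀ r := by
    intro r hr
    apply ContinuousOn.intervalIntegrable
    apply hφc.mono
    intro x hx
    rcases le_total r₀ r with hc | hc
    · rw [uIcc_of_le hc] at hx; exact lt_of_lt_of_le hr₀ hx.1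
    · rw [uIcc_of_ge hc] at hx; exact lt_of_lt_of_le hr hx.1
  have hh' : ∀ r ∈ Ioi (0:ℝ), HasDerivAt h (-φ r) r := by
    intro r hr
    apply HasDerivAt.neg
    exact integral_hasDerivAt_right (hφint r hr)
      (hφc.stronglyMeasurableAtFilter isOpen_Ioi r hr)
      (hφc.continuousAt (isOpen_Ioi.mem_nhds hr))
  have hhc : ContinuousOn h (Ioi 0) :=
    fun r hr => ((hh' r hr).continuousAt).continuousWithinAt
  set M : ℝ := Cτ * r₀ * r₀ with hMdef
  have hM0 : 0 ≤ M := by positivity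
  have hhb : ∀ r ∈ Ioc (0:ℝ) r₀, |h r| ≤ M := by
    intro r hr
    have key : ‖∫ t in r₀..r, φ t‖ ≤ (Cτ * r₀) * |r - r₀| := by
      apply intervalIntegral.norm_integral_le_of_norm_le_const
      intro t ht
      rw [uIoc_of_ge hr.2] at ht
      have ht' : t ∈ Ioc (0:ℝ) r₀ := ⟨lt_trans hr.1 ht.1, ht.2⟩
      rw [Real.norm_eq_abs]
      exact le_trans (hφb t ht') (by nlinarith [ht'.1, ht'.2])
    rw [hhdef]
    simp only [abs_neg]
    rw [← Real.norm_eq_abs]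
    refine le_trans key ?_
    rw [abs_of_nonpos (by linarith [hr.2])]
    nlinarith [hr.1, hr.2]
  -- E : integrating factor
  set E : ℝ → ℝ := fun r => r^(n-1) * Real.exp (-h r) with hEdef
  have hEpos : ∀ r ∈ Ioi (0:ℝ), 0 < E r := by
    intro r hr; exact mul_pos (pow_pos hr _) (Real.exp_pos _)
  have hE' : ∀ r ∈ Ioi (0:ℝ), HasDerivAt E (τe r * E r) r := by
    intro r hr
    have h1 : HasDerivAt (fun r : ℝ => r^(n-1)) (((n-1 : ℕ):ℝ) * r^(n-1-1)) r :=
      hasDerivAt_pow _ _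
    have h2 : HasDerivAt (fun r => Real.exp (-h r)) (Real.exp (-h r) * φ r) r := by
      have h3 := ((hh' r hr).neg).exp
      simpa using h3
    have h3 := h1.mul h2
    convert h3 using 1
    · rfl
    · rfl
    · rfl
    have hrne : r ≠ 0 := ne_of_gt hr
    have hcast : ((n-1:ℕ):ℝ) = (n:ℝ) - 1 := by
      push_cast [Nat.cast_sub (show 1 ≤ n by omega)]; ring
    have hτe_eq : τe r = φ r + ((n:ℝ)-1)/r := by rw [hφdef]; ring
    have hpow : r ^ (n-1) = r^(n-1-1) * r := by
      rw [← pow_succ]; congr 1; omega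
    rw [hEdef]
    simp only [hτe_eq, hpow, hcast]
    field_simp
    ring
  have hEc : ContinuousOn E (Ioi 0) :=
    fun r hr => ((hE' r hr).continuousAt).continuousWithinAt
  have hElb : ∀ r ∈ Ioc (0:ℝ) r₀, r^(n-1) * Real.exp (-M) ≤ E r := by
    intro r hr
    apply mul_le_mul_of_nonneg_left _ (pow_nonneg hr.1.le _)
    apply Real.exp_le_exp.2
    have := abs_le.1 (hhb r hr); linarith [this.2]
  have hEub : ∀ r ∈ Ioc (0:ℝ) r₀, E r ≤ r^(n-1) * Real.exp M := by
    intro r hr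
    apply mul_le_mul_of_nonneg_left _ (pow_nonneg hr.1.le _)
    apply Real.exp_le_exp.2
    have := abs_le.1 (hhb r hr); linarith [this.1]
  -- ψ and I
  set ψ : ℝ → ℝ := (Ioi (0:ℝ)).indicator (fun t => E t * ge t) with hψdef
  have hψeq : ∀ t ∈ Ioi (0:ℝ), ψ t = E t * ge t :=
    fun t ht => indicator_of_mem ht _
  have hψc : ContinuousOn (fun t => E t * ge t) (Ioi 0) := hEc.mul hgec
  have hψca : ∀ r ∈ Ioi (0:ℝ), ContinuousAt ψ r := by
    intro r hr
    have hev : (fun t => E t * ge t) =ᶠ[nhds r] ψ :=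
      Filter.eventually_of_mem (isOpen_Ioi.mem_nhds hr)
        (fun t ht => (hψeq t ht).symm)
    exact (hψc.continuousAt (isOpen_Ioi.mem_nhds hr)).congr hev
  have hψb : ∀ t ∈ Ioc (0:ℝ) r₀, |ψ t| ≤ (Real.exp M * Cg) * t^n := by
    intro t ht
    rw [hψeq t ht.1, hgeq t ht, abs_mul, abs_of_pos (hEpos t ht.1)]
    have hpn : t^n = t^(n-1)*t := by rw [← pow_succ]; congr 1; omega
    calc E t * |g t| ≤ (t^(n-1) * Real.exp M) * (Cg * t) := by
          apply mul_le_mul (hEub t ht) (hg t ht) (abs_nonneg _)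
          exact mul_nonneg (pow_nonneg ht.1.le _) (Real.exp_pos M).le
      _ = (Real.exp M * Cg) * t^n := by rw [hpn]; ring
  have hψint : ∀ r ∈ Ioc (0:ℝ) r₀, IntervalIntegrable ψ volume 0 r := by
    intro r hr
    rw [intervalIntegrable_iff_integrableOn_Ioc_of_le hr.1.le]
    have hmeas : AEStronglyMeasurable ψ (volume.restrict (Ioc 0 r)) := by
      have h1 : AEStronglyMeasurable (fun t => E t * ge t) (volume.restrict (Ioc 0 r)) :=
        (hψc.mono (fun x hx => hx.1)).aestronglyMeasurable measurableSet_Ioc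
      apply h1.congr
      filter_upwards [ae_restrict_mem measurableSet_Ioc] with t ht
      exact (hψeq t ht.1).symm
    apply Integrable.mono' (g := fun _ => (Real.exp M * Cg) * r₀^n)
      (integrableOn_const measure_Ioc_lt_top.ne) hmeas
    filter_upwards [ae_restrict_mem measurableSet_Ioc] with t ht
    have ht' : t ∈ Ioc (0:ℝ) r₀ := ⟨ht.1, le_trans ht.2 hr.2⟩
    refine le_trans (hψb t ht') ?_
    have h0 : t^n ≤ r₀^n := pow_le_pow_left₀ ht'.1.le ht'.2 _
    have h1 : 0 ≤ Real.exp M * Cg := mul_nonneg (Real.exp_pos M).le hCg0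
    exact mul_le_mul_of_nonneg_left h0 h1
  set I : ℝ → ℝ := fun r => ∫ t in (0:ℝ)..r, ψ t with hIdef
  have hI' : ∀ r ∈ Ioc (0:ℝ) r₀, HasDerivAt I (ψ r) r := by
    intro r hr
    exact integral_hasDerivAt_right (hψint r hr)
      (ContinuousAt.stronglyMeasurableAtFilter isOpen_Ioi hψca r hr.1) (hψca r hr.1)
  have hIb : ∀ r ∈ Ioc (0:ℝ) r₀, |I r| ≤ (Real.exp M * Cg) * r^(n+1) := by
    intro r hr
    have key : ‖∫ t in (0:ℝ)..r, ψ t‖ ≤ ((Real.exp M * Cg) * r^n) * |r - 0| := by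
      apply intervalIntegral.norm_integral_le_of_norm_le_const
      intro t ht
      rw [uIoc_of_le hr.1.le] at ht
      have ht' : t ∈ Ioc (0:ℝ) r₀ := ⟨ht.1, le_trans ht.2 hr.2⟩
      rw [Real.norm_eq_abs]
      refine le_trans (hψb t ht') ?_
      exact mul_le_mul_of_nonneg_left (pow_le_pow_left₀ ht'.1.le ht.2 _)
        (mul_nonneg (Real.exp_pos M).le hCg0)
    rw [hIdef]
    rw [← Real.norm_eq_abs]
    refine le_trans key ?_
    rw [sub_zero, abs_of_pos hr.1, pow_succ]
    ring_nf
    exact le_refl _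
  -- the solution
  set ξ : ℝ → ℝ := fun r => I r / E r with hξdef
  set C : ℝ := Real.exp M * Real.exp M * Cg with hCdef
  have hC0 : 0 ≤ C := by positivity
  have hξb : ∀ r ∈ Ioc (0:ℝ) r₀, |ξ r| ≤ C * r^2 := by
    intro r hr
    have hEr := hEpos r hr.1
    have key : |I r| ≤ (C * r^2) * E r := by
      refine le_trans (hIb r hr) ?_
      have heq : (C * r ^ 2) * (r ^ (n - 1) * Real.exp (-M))
          = Real.exp M * Cg * r ^ (n+1) := by
        rw [hCdef, Real.exp_neg]
        have hpw : r ^ (n+1) = r^2 * r^(n-1) := by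
          rw [← pow_add]; congr 1; omega
        rw [hpw]
        field_simp
      rw [← heq]
      exact mul_le_mul_of_nonneg_left (hElb r hr)
        (mul_nonneg hC0 (sq_nonneg r))
    rw [hξdef]
    simp only [abs_div, abs_of_pos hEr]
    rw [div_le_iff₀ hEr]
    exact key
  have hξ' : ∀ r ∈ Ioc (0:ℝ) r₀, HasDerivAt ξ (g r - τ r * ξ r) r := by
    intro r hr
    have hr' : r ∈ Ioi (0:ℝ) := hr.1
    have hEr := hEpos r hr'
    have hd := (hI' r hr).div (hE' r hr') (ne_of_gt hEr)
    have heq : (ψ r * E r - I r * (τe r * E r)) / E r ^ 2 = g r - τ r * ξ r := by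
      rw [hψeq r hr', hgeq r hr, hτeq r hr, hξdef]
      field_simp
    rw [heq] at hd
    exact hd
  refine ⟨ξ, ⟨hξ', ⟨C * r₀^2, fun r hr => le_trans (hξb r hr) ?_⟩⟩, ⟨C, hξb⟩, ?_⟩
  · have : r^2 ≤ r₀^2 := pow_le_pow_left₀ hr.1.le hr.2 _
    exact mul_le_mul_of_nonneg_left this hC0
  -- uniqueness
  rintro ξ2 ⟨hode, B, hB⟩
  have hB0 : 0 ≤ B := le_trans (abs_nonneg _) (hB r₀ ⟨hr₀, le_refl _⟩)
  set δ : ℝ → ℝ := fun r => ξ2 r - ξ r with hδdef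
  have hδb : ∀ r ∈ Ioc (0:ℝ) r₀, |δ r| ≤ B + C * r₀^2 := by
    intro r hr
    refine le_trans (abs_sub _ _) ?_
    gcongr
    · exact hB r hr
    · refine le_trans (hξb r hr) ?_
      exact mul_le_mul_of_nonneg_left (pow_le_pow_left₀ hr.1.le hr.2 _) hC0
  have hδ' : ∀ r ∈ Ioc (0:ℝ) r₀, HasDerivAt (fun r => E r * δ r) 0 r := by
    intro r hr
    have hd := (hE' r hr.1).mul ((hode r hr).sub (hξ' r hr))
    have heq : τe r * E r * δ r + E r * ((g r - τ r * ξ2 r) - (g r - τ r * ξ r)) = 0 := by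
      rw [hτeq r hr, hδdef]; ring
    rw [show (ξ2 - ξ) r = δ r from rfl, heq] at hd
    exact hd
  set c : ℝ := E r₀ * δ r₀ with hcdef
  have hconst : ∀ a ∈ Ioc (0:ℝ) r₀, E a * δ a = c := by
    intro a ha
    have hcont : ContinuousOn (fun r => E r * δ r) (Icc a r₀) := by
      intro x hx
      have hx' : x ∈ Ioc (0:ℝ) r₀ := ⟨lt_of_lt_of_le ha.1 hx.1, hx.2⟩
      exact ((hδ' x hx').continuousAt).continuousWithinAt
    have hderiv : ∀ x ∈ Ico a r₀, HasDerivWithinAt (fun r => E r * δ r) 0 (Ici x) x := by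
      intro x hx
      have hx' : x ∈ Ioc (0:ℝ) r₀ := ⟨lt_of_lt_of_le ha.1 hx.1, hx.2.le⟩
      exact (hδ' x hx').hasDerivWithinAt
    have := constant_of_has_deriv_right_zero hcont hderiv r₀ ⟨ha.2, le_refl _⟩
    rw [hcdef, this]
  set K : ℝ := r₀^(n-2) * Real.exp M * (B + C * r₀^2) with hKdef
  have hc0 : c = 0 := by
    have hle : ∀ a ∈ Ioc (0:ℝ) r₀, |c| ≤ K * a := by
      intro a ha
      rw [← hconst a ha, abs_mul, abs_of_pos (hEpos a ha.1)]
      have h1 : E a ≤ a^(n-1) * Real.exp M := hEub a ha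
      have h2 : a^(n-1) ≤ a * r₀^(n-2) := by
        have : a^(n-1) = a * a^(n-2) := by rw [← pow_succ']; congr 1; omega
        rw [this]
        exact mul_le_mul_of_nonneg_left (pow_le_pow_left₀ ha.1.le ha.2 _) ha.1.le
      have h3 := hδb a ha
      have h4 : 0 ≤ B + C * r₀^2 := by positivity
      calc E a * |δ a| ≤ (a * r₀^(n-2) * Real.exp M) * (B + C * r₀^2) := by
            apply mul_le_mul (le_trans h1 (by nlinarith [Real.exp_pos M])) h3 (abs_nonneg _)
            exact mul_nonneg (mul_nonneg ha.1.le (pow_nonneg hr₀.le _)) (Real.exp_pos M).le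
        _ = K * a := by rw [hKdef]; ring
    have htends : Filter.Tendsto (fun a => K * a) (nhdsWithin 0 (Ioi 0)) (nhds 0) := by
      have : Filter.Tendsto (fun a : ℝ => K * a) (nhds 0) (nhds (K * 0)) :=
        (continuous_const.mul continuous_id).tendsto 0
      rw [mul_zero] at this
      exact this.mono_left nhdsWithin_le_nhds
    have hev : ∀ᶠ a in nhdsWithin (0:ℝ) (Ioi 0), |c| ≤ K * a := by
      filter_upwards [Ioc_mem_nhdsGT_of_mem (by exact ⟨le_refl _, hr₀⟩ : (0:ℝ) ∈ Ico 0 r₀)]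
        with a ha
      exact hle a ha
    have := ge_of_tendsto htends hev
    have habs : |c| ≤ 0 := this
    exact abs_nonpos_iff.1 habs
  intro r hr
  have h1 := hconst r hr
  rw [hc0] at h1
  have h2 : δ r = 0 := by
    rcases mul_eq_zero.1 h1 with h | h
    · exact absurd h (ne_of_gt (hEpos r hr.1))
    · exact h
  have h3 : ξ2 r - ξ r = 0 := h2
  linarith
end

section
/- Let n ≥ 2, N ≥ 5, and let τ : (0, r₀] → ℝ be continuous with τ(r) = (n−1)/r + Σ_{i=3}^{N−1} τᵢ rⁱ + O(r^{N}) as r → 0⁺ (τᵢ ∈ ℝ). Suppose g : (0, r₀] → ℝ is continuous with g(r) = Σ_{i=1}^{N−3} fᵢ rⁱ + O(r^{N−2}). Then the unique bounded solution ξ of ξ′ + τ ξ = g on (0, r₀] admits an expansion ξ(r) = Σ_{i=2}^{N−2} ξᵢ rⁱ + O(r^{N−1}) as r → 0⁺, for some real constants ξᵢ. -/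
open Set MeasureTheory intervalIntegral Topology

lemma core_est (ν m : ℕ) (hν : 1 ≤ ν) (r₀ : ℝ) (hr₀ : 0 < r₀)
    (τ h η : ℝ → ℝ) (A B D : ℝ)
    (hτc : ContinuousOn τ (Ioc 0 r₀)) (hhc : ContinuousOn h (Ioc 0 r₀))
    (hA : ∀ t ∈ Ioc (0:ℝ) r₀, |τ t - ν / t| ≤ A)
    (hD : ∀ t ∈ Ioc (0:ℝ) r₀, |h t| ≤ D * t ^ m)
    (hη : ∀ t ∈ Ioc (0:ℝ) r₀, HasDerivAt η (h t - τ t * η t) t)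
    (hB : ∀ t ∈ Ioc (0:ℝ) r₀, |η t| ≤ B) :
    ∀ r ∈ Ioc (0:ℝ) r₀, |η r| ≤ (Real.exp (A * r₀) * D) * r ^ (m + 1) := by
  have hD0 : 0 ≤ D := by
    have := hD r₀ ⟨hr₀, le_refl _⟩
    nlinarith [abs_nonneg (h r₀), pow_pos hr₀ m]
  have hA0 : 0 ≤ A := (abs_nonneg _).trans (hA r₀ ⟨hr₀, le_refl _⟩)
  -- main estimate on the open interval
  have main : ∀ r ∈ Ioo (0:ℝ) r₀, |η r| ≤ (Real.exp (A * r₀) * D) * r ^ (m + 1) := by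
    intro r hr
    -- the integrating factor exponent
    set F : ℝ → ℝ := fun t => ∫ u in t..r, τ u with hF
    have hsub : ∀ s ∈ Ioo (0:ℝ) r, Icc s r ⊆ Ioo 0 r₀ := fun s hs t ht =>
      ⟨lt_of_lt_of_le hs.1 ht.1, lt_of_le_of_lt ht.2 hr.2⟩
    -- derivative of F
    have hFd : ∀ t ∈ Ioo (0:ℝ) r₀, HasDerivAt F (-(τ t)) t := by
      intro t ht
      have hint : IntervalIntegrable τ volume t r := by
        apply ContinuousOn.intervalIntegrable
        apply hτc.mono
        intro u hu
        rw [uIcc_eq_union] at hu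
        rcases hu with hu | hu
        · exact ⟨lt_of_lt_of_le ht.1 hu.1, le_trans hu.2 hr.2.le⟩
        · exact ⟨lt_of_lt_of_le hr.1 hu.1, le_trans hu.2 ht.2.le⟩
      have hmeas : StronglyMeasurableAtFilter τ (𝓝 t) volume :=
        (hτc.mono Ioo_subset_Ioc_self).stronglyMeasurableAtFilter isOpen_Ioo t ht
      have hcont : ContinuousAt τ t :=
        (hτc.mono Ioo_subset_Ioc_self).continuousAt (isOpen_Ioo.mem_nhds ht)
      exact intervalIntegral.integral_hasDerivAt_left hint hmeas hcont
    -- key ratio bound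
    have hratio : ∀ t ∈ Ioc (0:ℝ) r, Real.exp (-F t) ≤ Real.exp (A*r₀) * (t/r)^ν := by
      intro t ht
      have htr : t ≤ r := ht.2
      have ht0 : 0 < t := ht.1
      have hFt : (ν:ℝ) * (Real.log r - Real.log t) - A * r₀ ≤ F t := by
        have h1 : ∫ u in t..r, ((ν:ℝ)/u - A) ≤ ∫ u in t..r, τ u := by
          apply intervalIntegral.integral_mono_on htr
          · apply ContinuousOn.intervalIntegrable
            apply ContinuousOn.sub (ContinuousOn.div continuousOn_const
              continuousOn_id ?_) continuousOn_const
            · intro u hu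
              rw [uIcc_of_le htr] at hu
              exact ne_of_gt (lt_of_lt_of_le ht0 hu.1)
          · apply ContinuousOn.intervalIntegrable
            apply hτc.mono
            intro u hu
            rw [uIcc_of_le htr] at hu
            exact ⟨lt_of_lt_of_le ht0 hu.1, le_trans hu.2 hr.2.le⟩
          · intro u hu
            have hu' : u ∈ Ioc (0:ℝ) r₀ := ⟨lt_of_lt_of_le ht0 hu.1, le_trans hu.2 hr.2.le⟩
            have := hA u hu'
            have := abs_le.1 this
            linarith [this.1]
        have h2 : ∫ u in t..r, ((ν:ℝ)/u - A) = (ν:ℝ) * (Real.log r - Real.log t) - A * (r - t) := by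
          rw [intervalIntegral.integral_sub, intervalIntegral.integral_const]
          · congr 1
            · have : ∀ u, (ν:ℝ)/u = (ν:ℝ) * (1/u) := by intro u; ring
              simp_rw [this]
              rw [intervalIntegral.integral_const_mul, integral_one_div]
              · rw [Real.log_div (ne_of_gt hr.1) (ne_of_gt ht0)]
              · intro hmem
                rw [uIcc_of_le htr] at hmem
                exact absurd hmem.1 (not_le.2 ht0)
            · simp [smul_eq_mul]; ring
          · apply ContinuousOn.intervalIntegrable
            apply ContinuousOn.div continuousOn_const continuousOn_id
            intro u hu
            rw [uIcc_of_le htr] at hu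
            exact ne_of_gt (lt_of_lt_of_le ht0 hu.1)
          · exact intervalIntegrable_const
        have h3 : A * (r - t) ≤ A * r₀ := by
          apply mul_le_mul_of_nonneg_left _ hA0
          linarith [hr.2, ht0]
        rw [h2] at h1
        linarith
      calc Real.exp (-F t) ≤ Real.exp (A*r₀ - (ν:ℝ) * (Real.log r - Real.log t)) := by
            apply Real.exp_le_exp.2; linarith
        _ = Real.exp (A*r₀) * (t/r)^ν := by
            have hx : (0:ℝ) < t / r := div_pos ht0 hr.1
            have hpow : (t/r)^ν = Real.exp ((ν:ℝ) * Real.log (t/r)) := by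
              rw [← Real.exp_log (pow_pos hx ν), Real.log_pow]
            rw [hpow, ← Real.exp_add]
            congr 1
            rw [Real.log_div (ne_of_gt ht0) (ne_of_gt hr.1)]
            ring_nf
    -- integrate from s to r and bound
    have key : ∀ s ∈ Ioo (0:ℝ) r, |η r| ≤ Real.exp (A*r₀) * B / r^ν * s^ν
        + Real.exp (A*r₀) * D * r ^ (m+1) := by
      intro s hs
      have hsr : s ≤ r := hs.2.le
      have hIcc : Icc s r ⊆ Ioo 0 r₀ := hsub s hs
      have hIcc' : Icc s r ⊆ Ioc 0 r₀ := fun t ht => Ioo_subset_Ioc_self (hIcc ht)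
      have hG : ∀ t ∈ uIcc s r, HasDerivAt (fun t => Real.exp (-F t) * η t)
          (Real.exp (-F t) * h t) t := by
        intro t ht
        rw [uIcc_of_le hsr] at ht
        have ht' := hIcc ht
        have hd1 : HasDerivAt (fun t => Real.exp (-F t)) (Real.exp (-F t) * τ t) t := by
          have h2 := ((hFd t ht').neg).exp
          exact h2.congr_deriv (by simp only [Pi.neg_apply, neg_neg])
        have h3 := hd1.mul (hη t (Ioo_subset_Ioc_self ht'))
        refine h3.congr_deriv ?_
        ring
      have hFcont : ContinuousOn F (Icc s r) := fun t ht =>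
        ((hFd t (hIcc ht)).continuousAt).continuousWithinAt
      have hint : IntervalIntegrable (fun t => Real.exp (-F t) * h t) volume s r := by
        apply ContinuousOn.intervalIntegrable
        rw [uIcc_of_le hsr]
        exact (Real.continuous_exp.comp_continuousOn hFcont.neg).mul (hhc.mono hIcc')
      have heq : ∫ t in s..r, Real.exp (-F t) * h t
          = Real.exp (-F r) * η r - Real.exp (-F s) * η s :=
        intervalIntegral.integral_eq_sub_of_hasDerivAt hG hint
      have hFr : F r = 0 := intervalIntegral.integral_same
      have hrpow : (0:ℝ) < r ^ ν := pow_pos hr.1 ν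
      have hbound : |∫ t in s..r, Real.exp (-F t) * h t|
          ≤ Real.exp (A*r₀) * D / r^ν * ∫ t in s..r, t^(ν+m) := by
        have step1 : |∫ t in s..r, Real.exp (-F t) * h t|
            ≤ ∫ t in s..r, |Real.exp (-F t) * h t| :=
          intervalIntegral.abs_integral_le_integral_abs hsr
        have step2 : ∫ t in s..r, |Real.exp (-F t) * h t|
            ≤ ∫ t in s..r, Real.exp (A*r₀) * D / r^ν * t^(ν+m) := by
          apply intervalIntegral.integral_mono_on hsr
          · exact hint.abs
          · apply ContinuousOn.intervalIntegrable
            exact (continuousOn_const.mul ((continuousOn_pow _).mono (Set.subset_univ _)))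
          · intro t ht
            have ht' := hIcc' ht
            have ht0 : 0 < t := ht'.1
            have h1 : |Real.exp (-F t) * h t| = Real.exp (-F t) * |h t| := by
              rw [abs_mul, abs_of_pos (Real.exp_pos _)]
            rw [h1]
            have h2 := hratio t ⟨ht0, ht.2⟩
            have h3 := hD t ht'
            calc Real.exp (-F t) * |h t| ≤ (Real.exp (A*r₀) * (t/r)^ν) * (D * t^m) := by
                  apply mul_le_mul h2 h3 (abs_nonneg _)
                  exact mul_nonneg (Real.exp_pos _).le (pow_nonneg (div_nonneg ht0.le hr.1.le) _)
              _ = Real.exp (A*r₀) * D / r^ν * t^(ν+m) := by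
                  rw [div_pow, pow_add]
                  field_simp
        calc |∫ t in s..r, Real.exp (-F t) * h t| ≤ _ := step1
          _ ≤ _ := step2
          _ = Real.exp (A*r₀) * D / r^ν * ∫ t in s..r, t^(ν+m) := by
              rw [intervalIntegral.integral_const_mul]
      have hintval : ∫ t in s..r, t^(ν+m) ≤ r ^ (ν+m+1) := by
        rw [integral_pow]
        have h1 : (0:ℝ) ≤ s ^ (ν+m+1) := pow_nonneg hs.1.le _
        have h3 : (1:ℝ) ≤ ((ν+m:ℕ):ℝ) + 1 := by
          have : (0:ℝ) ≤ ((ν+m:ℕ):ℝ) := Nat.cast_nonneg _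
          linarith
        rw [div_le_iff₀ (by linarith)]
        have h5 : (0:ℝ) ≤ r ^ (ν+m+1) := pow_nonneg hr.1.le _
        nlinarith
      -- combine
      have hcomb : |η r| ≤ Real.exp (-F s) * B + Real.exp (A*r₀) * D / r^ν * r^(ν+m+1) := by
        have h4 : η r = Real.exp (-F s) * η s + ∫ t in s..r, Real.exp (-F t) * h t := by
          rw [heq, hFr]
          simp
        rw [h4]
        have h5 : |Real.exp (-F s) * η s| ≤ Real.exp (-F s) * B := by
          rw [abs_mul, abs_of_pos (Real.exp_pos _)]
          exact mul_le_mul_of_nonneg_left (hB s (hIcc' ⟨le_refl s, hsr⟩)) (Real.exp_pos _).le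
        have h6 : Real.exp (A*r₀) * D / r^ν * (∫ t in s..r, t^(ν+m))
            ≤ Real.exp (A*r₀) * D / r^ν * r^(ν+m+1) := by
          apply mul_le_mul_of_nonneg_left hintval
          positivity
        calc |Real.exp (-F s) * η s + ∫ t in s..r, Real.exp (-F t) * h t|
            ≤ |Real.exp (-F s) * η s| + |∫ t in s..r, Real.exp (-F t) * h t| := abs_add_le _ _
          _ ≤ Real.exp (-F s) * B + Real.exp (A*r₀) * D / r^ν * r^(ν+m+1) := by
              linarith [hbound]
      have h7 : Real.exp (-F s) * B ≤ Real.exp (A*r₀) * B / r^ν * s^ν := by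
        have hB0 : 0 ≤ B := (abs_nonneg _).trans (hB r (Ioo_subset_Ioc_self hr))
        have := hratio s ⟨hs.1, hsr⟩
        calc Real.exp (-F s) * B ≤ Real.exp (A*r₀) * (s/r)^ν * B :=
              mul_le_mul_of_nonneg_right this hB0
          _ = Real.exp (A*r₀) * B / r^ν * s^ν := by
              rw [div_pow]; field_simp
      have h8 : Real.exp (A*r₀) * D / r^ν * r^(ν+m+1) = Real.exp (A*r₀) * D * r^(m+1) := by
        rw [pow_add, pow_add]
        field_simp
        ring
      rw [h8] at hcomb
      linarith
    -- let s tend to 0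
    have hν0 : ν ≠ 0 := by omega
    have hlim : Filter.Tendsto
        (fun s : ℝ => Real.exp (A*r₀) * B / r^ν * s^ν + Real.exp (A*r₀) * D * r ^ (m+1))
        (nhdsWithin 0 (Ioi 0)) (nhds (Real.exp (A*r₀) * D * r ^ (m+1))) := by
      have hc : Continuous (fun s : ℝ => Real.exp (A*r₀) * B / r^ν * s^ν
          + Real.exp (A*r₀) * D * r ^ (m+1)) :=
        (continuous_const.mul (continuous_pow ν)).add continuous_const
      have h9 := (hc.tendsto 0).mono_left (nhdsWithin_le_nhds (s := Ioi (0:ℝ)))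
      simpa [zero_pow hν0] using h9
    have hev : ∀ᶠ s in nhdsWithin (0:ℝ) (Ioi 0),
        |η r| ≤ Real.exp (A*r₀) * B / r^ν * s^ν + Real.exp (A*r₀) * D * r ^ (m+1) := by
      filter_upwards [Ioo_mem_nhdsGT_of_mem (Set.mem_Ico.2 ⟨le_refl (0:ℝ), hr.1⟩)] with s hs
      exact key s hs
    exact ge_of_tendsto hlim hev
  intro r hrm
  rcases eq_or_lt_of_le hrm.2 with he | hlt
  · have hcont : ContinuousAt η r := (hη r hrm).continuousAt
    have h1 : Filter.Tendsto (fun x => |η x|) (nhdsWithin r (Iio r)) (nhds (|η r|)) :=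
      ((continuous_abs.continuousAt.comp hcont).tendsto).mono_left nhdsWithin_le_nhds
    have h2 : Filter.Tendsto (fun x : ℝ => Real.exp (A*r₀) * D * x ^ (m+1))
        (nhdsWithin r (Iio r)) (nhds (Real.exp (A*r₀) * D * r ^ (m+1))) := by
      exact ((continuous_const.mul (continuous_pow (m+1))).tendsto r).mono_left nhdsWithin_le_nhds
    have hne : (nhdsWithin r (Iio r)).NeBot := nhdsLT_neBot r
    apply le_of_tendsto_of_tendsto h1 h2
    filter_upwards [Ioo_mem_nhdsLT_of_mem (Set.mem_Ioc.2 ⟨hrm.1, le_refl r⟩)] with x hx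
    exact main x ⟨hx.1, lt_of_lt_of_le hx.2 (le_of_eq he)⟩
  · exact main r ⟨hrm.1, hlt⟩

lemma expand_ind (n N : ℕ) (hn : 2 ≤ n) (r₀ : ℝ) (hr₀ : 0 < r₀)
    (τ : ℝ → ℝ) (τc : ℕ → ℝ) (Cτ : ℝ)
    (hτc : ContinuousOn τ (Ioc 0 r₀))
    (hτ : ∀ r ∈ Ioc (0:ℝ) r₀,
      |τ r - (((n:ℝ) - 1)/r + ∑ i ∈ Finset.Icc 3 (N-1), τc i * r ^ i)| ≤ Cτ * r ^ N) :
    ∀ (k : ℕ), ∀ (m : ℕ), k ≤ N + 1 → 1 ≤ m → ∀ (η h : ℝ → ℝ) (a : ℕ → ℝ) (B D : ℝ),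
    ContinuousOn h (Ioc 0 r₀) →
    (∀ t ∈ Ioc (0:ℝ) r₀, HasDerivAt η (h t - τ t * η t) t) →
    (∀ t ∈ Ioc (0:ℝ) r₀, |η t| ≤ B) →
    (∀ t ∈ Ioc (0:ℝ) r₀, |h t - ∑ i ∈ Finset.range k, a i * t ^ (m - 1 + i)| ≤ D * t ^ (m - 1 + k)) →
    ∃ (b : ℕ → ℝ) (C : ℝ), ∀ t ∈ Ioc (0:ℝ) r₀,
      |η t - ∑ i ∈ Finset.range k, b i * t ^ (m + i)| ≤ C * t ^ (m + k) := by
  -- uniform bound on |τ t - (n-1)/t|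
  have hcast : ((n:ℝ) - 1) = ((n - 1 : ℕ) : ℝ) := by
    have : (1:ℕ) ≤ n := by omega
    push_cast [Nat.cast_sub this]
    ring
  set A : ℝ := (∑ i ∈ Finset.Icc 3 (N-1), |τc i| * r₀ ^ i) + max Cτ 0 * r₀ ^ N with hAdef
  have hA : ∀ t ∈ Ioc (0:ℝ) r₀, |τ t - ((n - 1 : ℕ) : ℝ) / t| ≤ A := by
    intro t ht
    have h1 := hτ t ht
    have hS : |∑ i ∈ Finset.Icc 3 (N-1), τc i * t ^ i|
        ≤ ∑ i ∈ Finset.Icc 3 (N-1), |τc i| * r₀ ^ i := by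
      calc |∑ i ∈ Finset.Icc 3 (N-1), τc i * t ^ i|
          ≤ ∑ i ∈ Finset.Icc 3 (N-1), |τc i * t ^ i| := Finset.abs_sum_le_sum_abs _ _
        _ ≤ ∑ i ∈ Finset.Icc 3 (N-1), |τc i| * r₀ ^ i := by
            apply Finset.sum_le_sum
            intro i _
            rw [abs_mul, abs_pow, abs_of_pos ht.1]
            exact mul_le_mul_of_nonneg_left (pow_le_pow_left₀ ht.1.le ht.2 i) (abs_nonneg _)
    have hC : Cτ * t ^ N ≤ max Cτ 0 * r₀ ^ N := by
      calc Cτ * t ^ N ≤ max Cτ 0 * t ^ N :=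
            mul_le_mul_of_nonneg_right (le_max_left _ _) (pow_nonneg ht.1.le N)
        _ ≤ max Cτ 0 * r₀ ^ N :=
            mul_le_mul_of_nonneg_left (pow_le_pow_left₀ ht.1.le ht.2 N) (le_max_right _ _)
    rw [← hcast]
    calc |τ t - ((n:ℝ) - 1) / t|
        = |(τ t - (((n:ℝ) - 1)/t + ∑ i ∈ Finset.Icc 3 (N-1), τc i * t ^ i))
            + ∑ i ∈ Finset.Icc 3 (N-1), τc i * t ^ i| := by congr 1; ring
      _ ≤ |τ t - (((n:ℝ) - 1)/t + ∑ i ∈ Finset.Icc 3 (N-1), τc i * t ^ i)|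
            + |∑ i ∈ Finset.Icc 3 (N-1), τc i * t ^ i| := abs_add_le _ _
      _ ≤ A := by rw [hAdef]; linarith
  have hν : 1 ≤ n - 1 := by omega
  intro k
  induction k with
  | zero =>
    intro m hk hm η h a B D hhc hη hB hsum
    refine ⟨fun _ => 0, Real.exp (A * r₀) * D, fun t ht => ?_⟩
    have h1 : ∀ t ∈ Ioc (0:ℝ) r₀, |h t| ≤ D * t ^ (m - 1) := by
      intro t ht
      have := hsum t ht
      simpa using this
    have h2 := core_est (n-1) (m-1) hν r₀ hr₀ τ h η A B D hτc hhc hA h1 hη hB t ht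
    have h3 : m - 1 + 1 = m := by omega
    rw [h3] at h2
    simpa using h2
  | succ k ih =>
    intro m hk hm η h a B D hhc hη hB hsum
    have hkN : k ≤ N := by omega
    have hden : ((m:ℝ) + (n:ℝ) - 1) ≠ 0 := by
      have h1 : (1:ℝ) ≤ (m:ℝ) := by exact_mod_cast hm
      have h2 : (2:ℝ) ≤ (n:ℝ) := by exact_mod_cast hn
      linarith
    set b₀ : ℝ := a 0 / ((m:ℝ) + (n:ℝ) - 1) with hb₀
    set η₁ : ℝ → ℝ := fun t => η t - b₀ * t ^ m with hη₁def
    set h₁ : ℝ → ℝ := fun t => h t - b₀ * m * t ^ (m-1) - b₀ * τ t * t ^ m with hh₁def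
    set a' : ℕ → ℝ := fun i => a (i+1) - b₀ * (if i ∈ Finset.Icc 3 (N-1) then τc i else 0)
      with ha'def
    set M1 : ℝ := max 1 r₀ with hM1
    have hM1one : (1:ℝ) ≤ M1 := le_max_left _ _
    -- continuity of h₁
    have hh₁c : ContinuousOn h₁ (Ioc 0 r₀) := by
      apply ContinuousOn.sub
      apply ContinuousOn.sub hhc
      · exact (continuousOn_const.mul (continuousOn_pow _))
      · exact (continuousOn_const.mul hτc).mul (continuousOn_pow _)
    -- derivative
    have hη₁d : ∀ t ∈ Ioc (0:ℝ) r₀, HasDerivAt η₁ (h₁ t - τ t * η₁ t) t := by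
      intro t ht
      have hd := (hη t ht).sub ((hasDerivAt_pow m t).const_mul b₀)
      refine hd.congr_deriv ?_
      simp only [hh₁def, hη₁def]
      push_cast
      ring
    -- bound
    have hη₁B : ∀ t ∈ Ioc (0:ℝ) r₀, |η₁ t| ≤ B + |b₀| * r₀ ^ m := by
      intro t ht
      simp only [hη₁def]
      calc |η t - b₀ * t ^ m| ≤ |η t| + |b₀ * t ^ m| := abs_sub _ _
        _ ≤ B + |b₀| * r₀ ^ m := by
            have h1 : |b₀ * t ^ m| = |b₀| * t ^ m := by
              rw [abs_mul, abs_pow, abs_of_pos ht.1]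
            rw [h1]
            have := mul_le_mul_of_nonneg_left (pow_le_pow_left₀ ht.1.le ht.2 m) (abs_nonneg b₀)
            linarith [hB t ht]
    -- the sums we manipulate, as functions of t
    set S1 : ℝ → ℝ := fun t => ∑ i ∈ Finset.range k, a (i+1) * t ^ (m+i) with hS1
    set S2 : ℝ → ℝ := fun t => ∑ i ∈ Finset.range k ∩ Finset.Icc 3 (N-1), τc i * t ^ (m+i)
      with hS2
    set S3 : ℝ → ℝ := fun t => ∑ j ∈ Finset.Icc 3 (N-1) \ Finset.range k, τc j * t ^ (m+j)
      with hS3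
    set S4 : ℝ → ℝ := fun t => ∑ i ∈ Finset.Icc 3 (N-1), τc i * t ^ i with hS4
    have e3 : a 0 = b₀ * ((m:ℝ) + (n:ℝ) - 1) := by
      rw [hb₀]; field_simp
    -- key pointwise identity
    have hid : ∀ t ∈ Ioc (0:ℝ) r₀,
        h₁ t - ∑ i ∈ Finset.range k, a' i * t ^ (m+i)
        = (h t - ∑ i ∈ Finset.range (k+1), a i * t ^ (m-1+i))
          - b₀ * (τ t - (((n:ℝ) - 1)/t + S4 t)) * t ^ m - b₀ * S3 t := by
      intro t ht
      have e4 : ∑ i ∈ Finset.range (k+1), a i * t ^ (m-1+i)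
          = S1 t + a 0 * t ^ (m-1) := by
        rw [Finset.sum_range_succ']
        congr 1
        · apply Finset.sum_congr rfl
          intro i _
          have hexp : m - 1 + (i+1) = m + i := by omega
          rw [hexp]
      have e5 : ∑ i ∈ Finset.range k, a' i * t ^ (m+i) = S1 t - b₀ * S2 t := by
        have h1 : ∀ i ∈ Finset.range k, a' i * t ^ (m+i)
            = a (i+1) * t ^ (m+i)
              - b₀ * ((if i ∈ Finset.Icc 3 (N-1) then τc i * t ^ (m+i) else 0)) := by
          intro i _
          simp only [ha'def]
          by_cases hcase : i ∈ Finset.Icc 3 (N-1)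
          · simp only [if_pos hcase]; ring
          · simp only [if_neg hcase]; ring
        rw [Finset.sum_congr rfl h1, Finset.sum_sub_distrib, ← Finset.mul_sum,
          Finset.sum_ite_mem]
      have hpowm : t ^ m = t ^ (m-1) * t := by
        rw [← pow_succ]
        congr 1
        omega
      have ediv : ((n:ℝ) - 1)/t * t ^ m = ((n:ℝ) - 1) * t ^ (m-1) := by
        rw [hpowm]
        field_simp [ht.1.ne']
      have e2 : S4 t * t ^ m = S2 t + S3 t := by
        simp only [hS4]
        rw [Finset.sum_mul]
        have h2 : ∀ i ∈ Finset.Icc 3 (N-1), τc i * t ^ i * t ^ m = τc i * t ^ (m+i) := by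
          intro i _
          rw [pow_add]
          ring
        rw [Finset.sum_congr rfl h2,
          ← Finset.sum_inter_add_sum_sdiff (Finset.Icc 3 (N-1)) (Finset.range k)
            (fun i => τc i * t ^ (m+i))]
        congr 1
        rw [Finset.inter_comm]
      simp only [hh₁def]
      rw [e5, e4]
      linear_combination t ^ (m-1) * e3 + (-b₀) * ediv + (-b₀) * e2
    -- estimate for the new source term
    set TT : ℝ := ∑ j ∈ Finset.Icc 3 (N-1), |τc j| with hTT
    set D' : ℝ := D + |b₀| * max Cτ 0 * M1 ^ N + |b₀| * TT * M1 ^ N with hD'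
    have hest : ∀ t ∈ Ioc (0:ℝ) r₀,
        |h₁ t - ∑ i ∈ Finset.range k, a' i * t ^ (m+i)| ≤ D' * t ^ (m+k) := by
      intro t ht
      have ht0 : (0:ℝ) < t := ht.1
      have htM : t ≤ M1 := le_trans ht.2 (le_max_right 1 r₀)
      have hpow1 : ∀ j : ℕ, j ≤ N → k ≤ j → t ^ (m+j) ≤ M1 ^ N * t ^ (m+k) := by
        intro j hjN hkj
        have h1 : m + j = (m+k) + (j-k) := by omega
        rw [h1, pow_add]
        have h2 : t ^ (j-k) ≤ M1 ^ (j-k) := pow_le_pow_left₀ ht0.le htM _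
        have h3 : M1 ^ (j-k) ≤ M1 ^ N := pow_le_pow_right₀ hM1one (by omega)
        have h4 : (0:ℝ) ≤ t ^ (m+k) := pow_nonneg ht0.le _
        nlinarith
      -- term 1
      have hT1 : |h t - ∑ i ∈ Finset.range (k+1), a i * t ^ (m-1+i)| ≤ D * t ^ (m+k) := by
        have := hsum t ht
        have h1 : m - 1 + (k+1) = m + k := by omega
        rwa [h1] at this
      -- term 2
      have hT2 : |b₀ * (τ t - (((n:ℝ) - 1)/t + S4 t)) * t ^ m|
          ≤ |b₀| * max Cτ 0 * M1 ^ N * t ^ (m+k) := by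
        have h1 : |b₀ * (τ t - (((n:ℝ) - 1)/t + S4 t)) * t ^ m|
            = |b₀| * |τ t - (((n:ℝ) - 1)/t + S4 t)| * t ^ m := by
          rw [abs_mul, abs_mul, abs_pow, abs_of_pos ht0]
        rw [h1]
        have h2 := hτ t ht
        have h3 : Cτ * t ^ N ≤ max Cτ 0 * t ^ N :=
          mul_le_mul_of_nonneg_right (le_max_left _ _) (pow_nonneg ht0.le _)
        have h4 : |τ t - (((n:ℝ) - 1)/t + S4 t)| ≤ max Cτ 0 * t ^ N := le_trans h2 h3
        have h5 : t ^ (N + m) ≤ M1 ^ N * t ^ (m+k) := by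
          have : N + m = m + N := by omega
          rw [this]
          exact hpow1 N (le_refl N) hkN
        have h6 : |b₀| * |τ t - (((n:ℝ) - 1)/t + S4 t)| * t ^ m
            ≤ |b₀| * (max Cτ 0 * t ^ N) * t ^ m := by
          have := mul_le_mul_of_nonneg_left h4 (abs_nonneg b₀)
          exact mul_le_mul_of_nonneg_right this (pow_nonneg ht0.le _)
        have h7 : |b₀| * (max Cτ 0 * t ^ N) * t ^ m
            = |b₀| * max Cτ 0 * t ^ (N + m) := by
          rw [pow_add]; ring
        have h8 : (0:ℝ) ≤ |b₀| * max Cτ 0 := mul_nonneg (abs_nonneg _) (le_max_right _ _)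
        calc |b₀| * |τ t - (((n:ℝ) - 1)/t + S4 t)| * t ^ m
            ≤ |b₀| * max Cτ 0 * t ^ (N + m) := by rw [← h7]; exact h6
          _ ≤ |b₀| * max Cτ 0 * (M1 ^ N * t ^ (m+k)) := mul_le_mul_of_nonneg_left h5 h8
          _ = |b₀| * max Cτ 0 * M1 ^ N * t ^ (m+k) := by ring
      -- term 3
      have hT3 : |b₀ * S3 t| ≤ |b₀| * TT * M1 ^ N * t ^ (m+k) := by
        have h1 : |S3 t| ≤ TT * (M1 ^ N * t ^ (m+k)) := by
          simp only [hS3]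
          calc |∑ j ∈ Finset.Icc 3 (N-1) \ Finset.range k, τc j * t ^ (m+j)|
              ≤ ∑ j ∈ Finset.Icc 3 (N-1) \ Finset.range k, |τc j * t ^ (m+j)| :=
                Finset.abs_sum_le_sum_abs _ _
            _ ≤ ∑ j ∈ Finset.Icc 3 (N-1) \ Finset.range k, |τc j| * (M1 ^ N * t ^ (m+k)) := by
                apply Finset.sum_le_sum
                intro j hj
                rw [Finset.mem_sdiff, Finset.mem_Icc, Finset.mem_range] at hj
                have hjk : k ≤ j := by omega
                have hjN : j ≤ N := by omega
                rw [abs_mul, abs_pow, abs_of_pos ht0]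
                exact mul_le_mul_of_nonneg_left (hpow1 j hjN hjk) (abs_nonneg _)
            _ = (∑ j ∈ Finset.Icc 3 (N-1) \ Finset.range k, |τc j|) * (M1 ^ N * t ^ (m+k)) := by
                rw [← Finset.sum_mul]
            _ ≤ TT * (M1 ^ N * t ^ (m+k)) := by
                apply mul_le_mul_of_nonneg_right
                · exact Finset.sum_le_sum_of_subset_of_nonneg (Finset.sdiff_subset)
                    (fun j _ _ => abs_nonneg _)
                · positivity
        rw [abs_mul]
        calc |b₀| * |S3 t| ≤ |b₀| * (TT * (M1 ^ N * t ^ (m+k))) :=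
              mul_le_mul_of_nonneg_left h1 (abs_nonneg _)
          _ = |b₀| * TT * M1 ^ N * t ^ (m+k) := by ring
      rw [hid t ht]
      calc |(h t - ∑ i ∈ Finset.range (k+1), a i * t ^ (m-1+i))
            - b₀ * (τ t - (((n:ℝ) - 1)/t + S4 t)) * t ^ m - b₀ * S3 t|
          ≤ |(h t - ∑ i ∈ Finset.range (k+1), a i * t ^ (m-1+i))
            - b₀ * (τ t - (((n:ℝ) - 1)/t + S4 t)) * t ^ m| + |b₀ * S3 t| := abs_sub _ _
        _ ≤ |h t - ∑ i ∈ Finset.range (k+1), a i * t ^ (m-1+i)|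
            + |b₀ * (τ t - (((n:ℝ) - 1)/t + S4 t)) * t ^ m| + |b₀ * S3 t| := by
            linarith [abs_sub (h t - ∑ i ∈ Finset.range (k+1), a i * t ^ (m-1+i))
              (b₀ * (τ t - (((n:ℝ) - 1)/t + S4 t)) * t ^ m)]
        _ ≤ D' * t ^ (m+k) := by
            rw [hD']
            have := hT1
            have := hT2
            have := hT3
            nlinarith [hT1, hT2, hT3]
    -- apply the inductive hypothesis
    have hest' : ∀ t ∈ Ioc (0:ℝ) r₀,
        |h₁ t - ∑ i ∈ Finset.range k, a' i * t ^ (m + 1 - 1 + i)| ≤ D' * t ^ (m + 1 - 1 + k) := by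
      simpa only [Nat.add_sub_cancel] using hest
    obtain ⟨b', C', hb'⟩ := ih (m+1) (by omega) (by omega) η₁ h₁ a' (B + |b₀| * r₀ ^ m) D'
      hh₁c hη₁d hη₁B hest'
    refine ⟨fun i => if i = 0 then b₀ else b' (i-1), C', fun t ht => ?_⟩
    have e6 : ∑ i ∈ Finset.range (k+1),
        (if i = 0 then b₀ else b' (i-1)) * t ^ (m+i)
        = (∑ i ∈ Finset.range k, b' i * t ^ (m+1+i)) + b₀ * t ^ m := by
      rw [Finset.sum_range_succ']
      congr 1
      · apply Finset.sum_congr rfl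
        intro i _
        simp only [Nat.succ_ne_zero, if_false, Nat.add_sub_cancel]
        have hexp : m + (i+1) = m + 1 + i := by omega
        rw [hexp]
    have e7 : η t - ∑ i ∈ Finset.range (k+1), (if i = 0 then b₀ else b' (i-1)) * t ^ (m+i)
        = η₁ t - ∑ i ∈ Finset.range k, b' i * t ^ (m+1+i) := by
      rw [e6]
      simp only [hη₁def]
      ring
    rw [e7]
    have h9 := hb' t ht
    have h10 : m + 1 + k = m + (k+1) := by omega
    rwa [h10] at h9


/-- Polynomial asymptotic expansions of τ and of the source g propagate to the
bounded solution of ξ′ + τ ξ = g, with a shift of one power of r. -/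
theorem stmt2 (n N : ℕ) (hn : 2 ≤ n) (hN : 5 ≤ N) (r₀ : ℝ) (hr₀ : 0 < r₀)
    (τ g : ℝ → ℝ) (τc fc : ℕ → ℝ)
    (hτc : ContinuousOn τ (Ioc 0 r₀)) (hgc : ContinuousOn g (Ioc 0 r₀))
    (Cτ Cg : ℝ)
    (hτ : ∀ r ∈ Ioc (0:ℝ) r₀,
      |τ r - (((n:ℝ) - 1)/r + ∑ i ∈ Finset.Icc 3 (N-1), τc i * r ^ i)| ≤ Cτ * r ^ N)
    (hg : ∀ r ∈ Ioc (0:ℝ) r₀,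
      |g r - ∑ i ∈ Finset.Icc 1 (N-3), fc i * r ^ i| ≤ Cg * r ^ (N-2))
    (ξ : ℝ → ℝ)
    (hξ : ∀ r ∈ Ioc (0:ℝ) r₀, HasDerivAt ξ (g r - τ r * ξ r) r)
    (hbd : ∃ B, ∀ r ∈ Ioc (0:ℝ) r₀, |ξ r| ≤ B) :
    ∃ (ξc : ℕ → ℝ) (C : ℝ),
      ∀ r ∈ Ioc (0:ℝ) r₀,
        |ξ r - ∑ i ∈ Finset.Icc 2 (N-2), ξc i * r ^ i| ≤ C * r ^ (N-1) := by
  obtain ⟨B, hB⟩ := hbd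
  have hsum : ∀ t ∈ Ioc (0:ℝ) r₀,
      |g t - ∑ i ∈ Finset.range (N-3), fc (1+i) * t ^ (2 - 1 + i)| ≤ Cg * t ^ (2 - 1 + (N-3)) := by
    intro t ht
    have h1 : ∑ i ∈ Finset.Icc 1 (N-3), fc i * t ^ i
        = ∑ i ∈ Finset.range (N-3), fc (1+i) * t ^ (2 - 1 + i) := by
      rw [← Finset.Ico_add_one_right_eq_Icc, Finset.sum_Ico_eq_sum_range]
      have h2 : N - 3 + 1 - 1 = N - 3 := by omega
      rw [h2]
    have h3 : 2 - 1 + (N-3) = N - 2 := by omega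
    rw [← h1, h3]
    exact hg t ht
  obtain ⟨b, C, hb⟩ := expand_ind n N hn r₀ hr₀ τ τc Cτ hτc hτ (N-3) 2 (by omega) (by omega)
    ξ g (fun i => fc (1+i)) B Cg hgc hξ hB hsum
  refine ⟨fun i => b (i-2), C, fun t ht => ?_⟩
  have h4 : ∑ i ∈ Finset.Icc 2 (N-2), b (i-2) * t ^ i
      = ∑ i ∈ Finset.range (N-3), b i * t ^ (2+i) := by
    rw [← Finset.Ico_add_one_right_eq_Icc, Finset.sum_Ico_eq_sum_range]
    have h5 : N - 2 + 1 - 2 = N - 3 := by omega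
    rw [h5]
    apply Finset.sum_congr rfl
    intro i _
    have h6 : 2 + i - 2 = i := by omega
    rw [h6]
  rw [h4]
  have h7 := hb t ht
  have h8 : 2 + (N-3) = N - 1 := by omega
  rwa [h8] at h7
end

section
/- Let n ≥ 2 and let ψ, F : [0, r₀] → ℝ be continuous with ψ(r) = O(r³) and F(r) = O(r³) as r → 0⁺. Define Y(r) = r^{−(n−1)/2} exp(½∫₀^r ψ(ρ)dρ) · ∫₀^r ρ^{(n−1)/2} exp(−½∫₀^ρ ψ(χ)dχ) F(ρ) dρ for r ∈ (0, r₀]. Then Y extends continuously to 0 with Y(0)=0, Y is the unique bounded-at-0 solution of Y′(r) = (½ψ(r) − (n−1)/(2r)) Y(r) + F(r), and Y(r) = O(r⁴) as r → 0⁺. -/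
open Set MeasureTheory intervalIntegral

section Helpers
/-- FTC: derivative of a primitive of a continuous function, within `Ioc 0 r₀`. -/
lemma stmt3_ftc {f : ℝ → ℝ} {r₀ : ℝ} (hf : ContinuousOn f (Icc 0 r₀))
    {r : ℝ} (hr : r ∈ Ioc (0:ℝ) r₀) :
    HasDerivWithinAt (fun u => ∫ x in (0:ℝ)..u, f x) (f r) (Ioc 0 r₀) r := by
  haveI : Fact (r ∈ Icc (0:ℝ) r₀) := ⟨Ioc_subset_Icc_self hr⟩
  have hint : IntervalIntegrable f volume 0 r := by
    apply (hf.mono ?_).intervalIntegrable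
    rw [uIcc_of_le hr.1.le]
    exact Icc_subset_Icc le_rfl hr.2
  exact (integral_hasDerivWithinAt_right hint
    (hf.stronglyMeasurableAtFilter_nhdsWithin measurableSet_Icc r)
    (hf r (Ioc_subset_Icc_self hr))).mono Ioc_subset_Icc_self

/-- vanish at 0 from the O(r³) bound. -/
lemma stmt3_zero {f : ℝ → ℝ} {r₀ c : ℝ} (hr₀ : 0 < r₀)
    (hf : ContinuousOn f (Icc 0 r₀))
    (h : ∀ r ∈ Ioc (0:ℝ) r₀, |f r| ≤ c * r ^ 3) : f 0 = 0 := by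
  haveI : (nhdsWithin (0:ℝ) (Ioc 0 r₀)).NeBot := by
    rw [nhdsWithin_Ioc_eq_nhdsGT hr₀]; infer_instance
  have l1 : Filter.Tendsto f (nhdsWithin 0 (Ioc 0 r₀)) (nhds (f 0)) :=
    ((hf 0 ⟨le_rfl, hr₀.le⟩).mono Ioc_subset_Icc_self).tendsto
  have l2 : Filter.Tendsto f (nhdsWithin 0 (Ioc 0 r₀)) (nhds 0) := by
    apply squeeze_zero_norm' (a := fun x => c * x ^ 3)
    · filter_upwards [self_mem_nhdsWithin] with x hx
      simpa [Real.norm_eq_abs] using h x hx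
    · have : Filter.Tendsto (fun x : ℝ => c * x ^ 3) (nhdsWithin 0 (Ioc 0 r₀)) (nhds (c * 0 ^ 3)) :=
        ((continuous_const.mul (continuous_pow 3)).tendsto (0:ℝ)).mono_left nhdsWithin_le_nhds
      simpa using this
  exact tendsto_nhds_unique l1 l2

/-- integral bound: |∫₀^r f| ≤ c r^{q+1}/(q+1) from |f| ≤ c ρ^q. -/
lemma stmt3_intb {f : ℝ → ℝ} {r q c : ℝ} (hr : 0 ≤ r) (hq : 0 < q)
    (hf : IntervalIntegrable f volume 0 r)
    (h : ∀ ρ ∈ Icc (0:ℝ) r, |f ρ| ≤ c * ρ ^ q) :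
    |∫ ρ in (0:ℝ)..r, f ρ| ≤ c * r ^ (q + 1) / (q + 1) := by
  have hgc : IntervalIntegrable (fun ρ => c * ρ ^ q) volume 0 r :=
    (continuous_const.mul (Real.continuous_rpow_const hq.le)).intervalIntegrable 0 r
  have h1 : |∫ ρ in (0:ℝ)..r, f ρ| ≤ ∫ ρ in (0:ℝ)..r, |f ρ| :=
    intervalIntegral.abs_integral_le_integral_abs hr
  have h2 : (∫ ρ in (0:ℝ)..r, |f ρ|) ≤ ∫ ρ in (0:ℝ)..r, c * ρ ^ q :=
    intervalIntegral.integral_mono_on hr hf.abs hgc h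
  have h3 : (∫ ρ in (0:ℝ)..r, c * ρ ^ q) = c * r ^ (q + 1) / (q + 1) := by
    rw [intervalIntegral.integral_const_mul, integral_rpow (Or.inl (by linarith))]
    rw [Real.zero_rpow (by positivity)]
    ring
  linarith
end Helpers

/-- The explicit integration formula for Y gives the unique bounded-at-0 solution of
Y′ = (ψ/2 − (n−1)/(2r))Y + F, extends continuously by Y(0)=0, and Y = O(r⁴). -/
theorem stmt3 (n : ℕ) (hn : 2 ≤ n) (r₀ : ℝ) (hr₀ : 0 < r₀)
    (ψ F : ℝ → ℝ)
    (hψc : ContinuousOn ψ (Icc 0 r₀)) (hFc : ContinuousOn F (Icc 0 r₀))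
    (Cψ CF : ℝ)
    (hψ : ∀ r ∈ Ioc (0:ℝ) r₀, |ψ r| ≤ Cψ * r ^ 3)
    (hF : ∀ r ∈ Ioc (0:ℝ) r₀, |F r| ≤ CF * r ^ 3)
    (Y : ℝ → ℝ)
    (hY : ∀ r ∈ Ioc (0:ℝ) r₀, Y r =
      r ^ (-(((n:ℝ) - 1)/2)) * Real.exp ((1/2) * ∫ ρ in (0:ℝ)..r, ψ ρ) *
        ∫ ρ in (0:ℝ)..r,
          ρ ^ (((n:ℝ) - 1)/2) * Real.exp (-(1/2) * ∫ χ in (0:ℝ)..ρ, ψ χ) * F ρ) :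
    Filter.Tendsto Y (nhdsWithin 0 (Ioi 0)) (nhds 0) ∧
    (∀ r ∈ Ioc (0:ℝ) r₀,
      HasDerivWithinAt Y ((ψ r / 2 - ((n:ℝ) - 1)/(2*r)) * Y r + F r) (Ioc 0 r₀) r) ∧
    (∀ Z : ℝ → ℝ,
      ((∀ r ∈ Ioc (0:ℝ) r₀,
          HasDerivWithinAt Z ((ψ r / 2 - ((n:ℝ) - 1)/(2*r)) * Z r + F r) (Ioc 0 r₀) r) ∧
        ∃ B, ∀ r ∈ Ioc (0:ℝ) r₀, |Z r| ≤ B) →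
      ∀ r ∈ Ioc (0:ℝ) r₀, Z r = Y r) ∧
    (∃ C, ∀ r ∈ Ioc (0:ℝ) r₀, |Y r| ≤ C * r ^ 4) := by
  have hn2 : (2:ℝ) ≤ (n:ℝ) := by exact_mod_cast hn
  set a : ℝ := ((n:ℝ) - 1)/2 with ha_def
  have ha0 : 0 < a := by rw [ha_def]; linarith
  set P : ℝ → ℝ := fun r => ∫ ρ in (0:ℝ)..r, ψ ρ with hPdef
  set g : ℝ → ℝ := fun ρ => ρ ^ a * Real.exp (-(1/2) * P ρ) * F ρ with hgdef
  set G : ℝ → ℝ := fun r => ∫ ρ in (0:ℝ)..r, g ρ with hGdef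
  have hYeq : ∀ r ∈ Ioc (0:ℝ) r₀, Y r = r ^ (-a) * Real.exp ((1/2) * P r) * G r := by
    intro r hr; rw [hY r hr]
  -- nonnegativity of the constants
  have hCψ0 : 0 ≤ Cψ := by
    have := hψ r₀ ⟨hr₀, le_rfl⟩
    nlinarith [abs_nonneg (ψ r₀), pow_pos hr₀ 3]
  have hCF0 : 0 ≤ CF := by
    have := hF r₀ ⟨hr₀, le_rfl⟩
    nlinarith [abs_nonneg (F r₀), pow_pos hr₀ 3]
  have hψ0 : ψ 0 = 0 := stmt3_zero hr₀ hψc hψ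
  have hF0 : F 0 = 0 := stmt3_zero hr₀ hFc hF
  -- continuity of P and g
  have hPc : ContinuousOn P (Icc 0 r₀) := by
    have : IntegrableOn ψ (uIcc 0 r₀) volume := by
      rw [uIcc_of_le hr₀.le]; exact hψc.integrableOn_Icc
    simpa [hPdef, uIcc_of_le hr₀.le] using
      intervalIntegral.continuousOn_primitive_interval this
  have hra : Continuous fun ρ : ℝ => ρ ^ a := Real.continuous_rpow_const ha0.le
  have hgc : ContinuousOn g (Icc 0 r₀) := by
    apply ContinuousOn.mul _ hFc
    exact (hra.continuousOn).mul
      (Real.continuous_exp.comp_continuousOn (continuousOn_const.mul hPc))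
  -- bound for P
  have hPb : ∀ r ∈ Icc (0:ℝ) r₀, |P r| ≤ Cψ * r₀ ^ 4 := by
    intro r hr
    have hint : IntervalIntegrable ψ volume 0 r := by
      apply (hψc.mono ?_).intervalIntegrable
      rw [uIcc_of_le hr.1]; exact Icc_subset_Icc le_rfl hr.2
    have key : |P r| ≤ Cψ * r ^ ((3:ℝ) + 1) / ((3:ℝ) + 1) := by
      apply stmt3_intb hr.1 (by norm_num) hint
      intro ρ hρ
      rcases eq_or_lt_of_le hρ.1 with h0 | h0
      · simp [← h0, hψ0]
      · have hb : |ψ ρ| ≤ Cψ * ρ ^ (3:ℕ) := hψ ρ ⟨h0, hρ.2.trans hr.2⟩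
        rwa [show ((3:ℝ)) = ((3:ℕ):ℝ) by norm_num, Real.rpow_natCast]
    have e4 : r ^ ((3:ℝ) + 1) = r ^ (4:ℕ) := by
      rw [show ((3:ℝ) + 1) = ((4:ℕ):ℝ) by norm_num, Real.rpow_natCast]
    rw [e4] at key
    have h4 : r ^ (4:ℕ) ≤ r₀ ^ (4:ℕ) := pow_le_pow_left₀ hr.1 hr.2 4
    nlinarith [mul_le_mul_of_nonneg_left h4 hCψ0, abs_nonneg (P r)]
  have hM : (0:ℝ) ≤ Cψ * r₀ ^ 4 := by positivity
  -- exponential bounds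
  set K : ℝ := Real.exp (Cψ * r₀ ^ 4) with hKdef
  have hK1 : (1:ℝ) ≤ K := by
    rw [hKdef, ← Real.exp_zero]
    exact Real.exp_le_exp.2 (by positivity)
  have hexp1 : ∀ r ∈ Icc (0:ℝ) r₀, Real.exp ((1/2) * P r) ≤ K := by
    intro r hr
    exact Real.exp_le_exp.2 (by have h := hPb r hr; have := le_abs_self (P r); linarith)
  have hexp2 : ∀ r ∈ Icc (0:ℝ) r₀, Real.exp (-(1/2) * P r) ≤ K := by
    intro r hr
    exact Real.exp_le_exp.2 (by have h := hPb r hr; have := neg_abs_le (P r); linarith)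
  -- bound for g
  have hgb : ∀ ρ ∈ Icc (0:ℝ) r₀, |g ρ| ≤ K * CF * ρ ^ (a + 3) := by
    intro ρ hρ
    rcases eq_or_lt_of_le hρ.1 with h0 | h0
    · rw [hgdef]
      simp [← h0, hF0, Real.zero_rpow (show a + 3 ≠ 0 by positivity)]
    · have hFb : |F ρ| ≤ CF * ρ ^ (3:ℕ) := hF ρ ⟨h0, hρ.2⟩
      have e1 : |g ρ| = ρ ^ a * Real.exp (-(1/2) * P ρ) * |F ρ| := by
        rw [hgdef]
        rw [abs_mul, abs_mul, abs_of_nonneg (Real.rpow_nonneg hρ.1 a),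
          abs_of_nonneg (Real.exp_nonneg _)]
      rw [e1]
      have e2 : ρ ^ (a + 3) = ρ ^ a * ρ ^ (3:ℕ) := by
        rw [Real.rpow_add h0, show ((3:ℝ)) = ((3:ℕ):ℝ) by norm_num, Real.rpow_natCast]
      have hρa : 0 ≤ ρ ^ a := Real.rpow_nonneg hρ.1 a
      have hρ3 : (0:ℝ) ≤ ρ ^ (3:ℕ) := by positivity
      calc ρ ^ a * Real.exp (-(1/2) * P ρ) * |F ρ|
          ≤ ρ ^ a * K * (CF * ρ ^ (3:ℕ)) := by
            apply mul_le_mul (mul_le_mul le_rfl (hexp2 ρ hρ) (Real.exp_nonneg _) hρa) hFb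
              (abs_nonneg _) (by positivity)
        _ = K * CF * (ρ ^ a * ρ ^ (3:ℕ)) := by ring
        _ = K * CF * ρ ^ (a + 3) := by rw [e2]
  -- bound for G
  have hGb : ∀ r ∈ Icc (0:ℝ) r₀, |G r| ≤ K * CF * r ^ (a + 4) / (a + 4) := by
    intro r hr
    have hint : IntervalIntegrable g volume 0 r := by
      apply (hgc.mono ?_).intervalIntegrable
      rw [uIcc_of_le hr.1]; exact Icc_subset_Icc le_rfl hr.2
    have key : |G r| ≤ K * CF * r ^ ((a + 3) + 1) / ((a + 3) + 1) :=
      stmt3_intb hr.1 (by linarith) hint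
        (fun ρ hρ => hgb ρ ⟨hρ.1, hρ.2.trans hr.2⟩)
    have e : (a + 3) + 1 = a + 4 := by ring
    rwa [e] at key
  -- O(r⁴) bound for Y
  have hKpos : 0 < K := lt_of_lt_of_le one_pos hK1
  set C : ℝ := K * (K * CF / (a + 4)) with hCdef
  have hYb : ∀ r ∈ Ioc (0:ℝ) r₀, |Y r| ≤ C * r ^ 4 := by
    intro r hr
    have hr1 : 0 < r := hr.1
    have hrIcc : r ∈ Icc (0:ℝ) r₀ := Ioc_subset_Icc_self hr
    have e1 : |Y r| = r ^ (-a) * Real.exp ((1/2) * P r) * |G r| := by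
      rw [hYeq r hr, abs_mul, abs_mul, abs_of_nonneg (Real.rpow_nonneg hr1.le _),
        abs_of_nonneg (Real.exp_nonneg _)]
    have hrma : 0 ≤ r ^ (-a) := Real.rpow_nonneg hr1.le _
    have e2 : r ^ (-a) * r ^ (a + 4) = r ^ (4:ℕ) := by
      rw [← Real.rpow_add hr1, show (-a + (a + 4)) = ((4:ℕ):ℝ) by push_cast; ring,
        Real.rpow_natCast]
    calc |Y r| = r ^ (-a) * Real.exp ((1/2) * P r) * |G r| := e1
      _ ≤ r ^ (-a) * K * (K * CF * r ^ (a + 4) / (a + 4)) := by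
          apply mul_le_mul (mul_le_mul le_rfl (hexp1 r hrIcc) (Real.exp_nonneg _) hrma)
            (hGb r hrIcc) (abs_nonneg _) (by positivity)
      _ = C * (r ^ (-a) * r ^ (a + 4)) := by rw [hCdef]; ring
      _ = C * r ^ (4:ℕ) := by rw [e2]
  -- FTC derivatives
  have hPder : ∀ r ∈ Ioc (0:ℝ) r₀, HasDerivWithinAt P (ψ r) (Ioc 0 r₀) r :=
    fun r hr => stmt3_ftc hψc hr
  have hGder : ∀ r ∈ Ioc (0:ℝ) r₀, HasDerivWithinAt G (g r) (Ioc 0 r₀) r :=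
    fun r hr => stmt3_ftc hgc hr
  -- part 2 : Y solves the ODE
  have part2 : ∀ r ∈ Ioc (0:ℝ) r₀,
      HasDerivWithinAt Y ((ψ r / 2 - ((n:ℝ) - 1)/(2*r)) * Y r + F r) (Ioc 0 r₀) r := by
    intro r hr
    have hr1 : 0 < r := hr.1
    have d1 : HasDerivWithinAt (fun u : ℝ => u ^ (-a)) (-a * r ^ (-a - 1)) (Ioc 0 r₀) r :=
      (Real.hasDerivAt_rpow_const (Or.inl hr1.ne')).hasDerivWithinAt
    have d2 : HasDerivWithinAt (fun u => Real.exp ((1/2) * P u))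
        (Real.exp ((1/2) * P r) * ((1/2) * ψ r)) (Ioc 0 r₀) r :=
      ((hPder r hr).const_mul (1/2)).exp
    have d3 := hGder r hr
    have dY : HasDerivWithinAt (fun u => u ^ (-a) * Real.exp ((1/2) * P u) * G u)
        ((-a * r ^ (-a - 1) * Real.exp ((1/2) * P r) +
          r ^ (-a) * (Real.exp ((1/2) * P r) * ((1/2) * ψ r))) * G r +
          r ^ (-a) * Real.exp ((1/2) * P r) * g r) (Ioc 0 r₀) r :=
      (d1.mul d2).mul d3
    have hcongr := dY.congr hYeq (hYeq r hr)
    convert hcongr using 1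
    · exact rfl
    · exact rfl
    -- algebraic identity
    have hE : Real.exp (-(1/2) * P r) * Real.exp ((1/2) * P r) = 1 := by
      rw [← Real.exp_add]; ring_nf; exact Real.exp_zero
    have hxy : r ^ (-a) * r ^ a = 1 := by
      rw [← Real.rpow_add hr1]; simp
    have e1 : r ^ (-a - 1) = r ^ (-a) / r := by
      rw [Real.rpow_sub hr1, Real.rpow_one]
    have hn1 : ((n:ℝ) - 1) = 2 * a := by rw [ha_def]; ring
    rw [hYeq r hr, e1, hgdef, hn1]
    linear_combination (-(F r) * (r ^ (-a) * r ^ a)) * hE + (-(F r)) * hxy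
  -- part 1 : continuity at 0
  have part1 : Filter.Tendsto Y (nhdsWithin 0 (Ioi 0)) (nhds 0) := by
    apply squeeze_zero_norm' (a := fun x => C * x ^ 4)
    · filter_upwards [Ioc_mem_nhdsGT_of_mem ⟨le_rfl, hr₀⟩] with x hx
      simpa [Real.norm_eq_abs] using hYb x hx
    · have : Filter.Tendsto (fun x : ℝ => C * x ^ 4) (nhdsWithin 0 (Ioi 0)) (nhds (C * 0 ^ 4)) :=
        ((continuous_const.mul (continuous_pow 4)).tendsto (0:ℝ)).mono_left nhdsWithin_le_nhds
      simpa using this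
  refine ⟨part1, part2, ?_, ⟨C, hYb⟩⟩
  -- part 3 : uniqueness
  rintro Z ⟨hZd, B, hZB⟩
  set W : ℝ → ℝ := fun u => u ^ a * Real.exp (-(1/2) * P u) * (Z u - Y u) with hWdef
  have hWd : ∀ r ∈ Ioc (0:ℝ) r₀, HasDerivWithinAt W (0:ℝ) (Ioc 0 r₀) r := by
    intro r hr
    have hr1 : 0 < r := hr.1
    have d1 : HasDerivWithinAt (fun u : ℝ => u ^ a) (a * r ^ (a - 1)) (Ioc 0 r₀) r :=
      (Real.hasDerivAt_rpow_const (Or.inl hr1.ne')).hasDerivWithinAt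
    have d2 : HasDerivWithinAt (fun u => Real.exp (-(1/2) * P u))
        (Real.exp (-(1/2) * P r) * (-(1/2) * ψ r)) (Ioc 0 r₀) r :=
      ((hPder r hr).const_mul (-(1/2))).exp
    have d3 : HasDerivWithinAt (fun u => Z u - Y u)
        (((ψ r / 2 - ((n:ℝ) - 1)/(2*r)) * Z r + F r) -
         ((ψ r / 2 - ((n:ℝ) - 1)/(2*r)) * Y r + F r)) (Ioc 0 r₀) r :=
      (hZd r hr).sub (part2 r hr)
    have dW := (d1.mul d2).mul d3
    convert dW using 1
    · exact rfl
    · exact rfl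
    · exact rfl
    have e1 : r ^ (a - 1) = r ^ a / r := by rw [Real.rpow_sub hr1, Real.rpow_one]
    have hn1 : ((n:ℝ) - 1) = 2 * a := by rw [ha_def]; ring
    rw [e1, hn1]
    simp only [Pi.mul_apply]
    have hr0 : r ≠ 0 := hr1.ne'
    field_simp
    ring
  have hWconst : ∀ x ∈ Ioc (0:ℝ) r₀, ∀ y ∈ Ioc (0:ℝ) r₀, W x = W y := by
    intro x hx y hy
    have h := Convex.norm_image_sub_le_of_norm_hasDerivWithin_le (f := W) (C := (0:ℝ))
      (f' := fun _ => (0:ℝ)) (fun u hu => hWd u hu) (fun u _ => by simp)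
      (convex_Ioc (0:ℝ) r₀) hx hy
    have h0 : ‖W y - W x‖ ≤ 0 := by simpa using h
    have := norm_le_zero_iff.1 h0
    linarith [sub_eq_zero.1 this]
  intro r hr
  have hr1 : 0 < r := hr.1
  -- the constant value of W is 0
  have hWb : ∀ t ∈ Ioc (0:ℝ) r₀, |W t| ≤ t ^ a * (K * (B + C * r₀ ^ 4)) := by
    intro t ht
    have htIcc : t ∈ Icc (0:ℝ) r₀ := Ioc_subset_Icc_self ht
    have hta : 0 ≤ t ^ a := Real.rpow_nonneg ht.1.le a
    have hZY : |Z t - Y t| ≤ B + C * r₀ ^ 4 := by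
      have h1 := hZB t ht
      have h2 := hYb t ht
      have h3 : t ^ 4 ≤ r₀ ^ 4 := pow_le_pow_left₀ ht.1.le ht.2 4
      have hC0 : 0 ≤ C := by rw [hCdef]; positivity
      have := abs_sub (Z t) (Y t)
      nlinarith [mul_le_mul_of_nonneg_left h3 hC0, abs_sub_abs_le_abs_sub (Z t) (Y t),
        abs_sub (Z t) (Y t)]
    have e1 : |W t| = t ^ a * Real.exp (-(1/2) * P t) * |Z t - Y t| := by
      rw [hWdef, abs_mul, abs_mul, abs_of_nonneg hta, abs_of_nonneg (Real.exp_nonneg _)]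
    rw [e1]
    have hB0 : 0 ≤ B + C * r₀ ^ 4 := le_trans (abs_nonneg _) hZY
    calc t ^ a * Real.exp (-(1/2) * P t) * |Z t - Y t|
        ≤ t ^ a * K * (B + C * r₀ ^ 4) := by
          apply mul_le_mul (mul_le_mul le_rfl (hexp2 t htIcc) (Real.exp_nonneg _) hta) hZY
            (abs_nonneg _) (by positivity)
      _ = t ^ a * (K * (B + C * r₀ ^ 4)) := by ring
  have hW0 : W r = 0 := by
    have hlim : Filter.Tendsto (fun t : ℝ => t ^ a * (K * (B + C * r₀ ^ 4)))
        (nhdsWithin 0 (Ioi 0)) (nhds 0) := by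
      have h1 : Filter.Tendsto (fun t : ℝ => t ^ a) (nhdsWithin 0 (Ioi 0)) (nhds 0) := by
        have := (Real.continuousAt_rpow_const 0 a (Or.inr ha0.le)).tendsto.mono_left
          (nhdsWithin_le_nhds (s := Ioi (0:ℝ)))
        simpa [Real.zero_rpow ha0.ne'] using this
      simpa using h1.mul_const (K * (B + C * r₀ ^ 4))
    have hev : ∀ᶠ t in nhdsWithin (0:ℝ) (Ioi 0),
        |W r| ≤ t ^ a * (K * (B + C * r₀ ^ 4)) := by
      filter_upwards [Ioc_mem_nhdsGT_of_mem ⟨le_rfl, hr₀⟩] with t ht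
      rw [hWconst r hr t ht]
      exact hWb t ht
    have : |W r| ≤ 0 := ge_of_tendsto hlim hev
    exact abs_eq_zero.1 (le_antisymm this (abs_nonneg _))
  -- conclude Z r = Y r
  have hra0 : r ^ a ≠ 0 := (Real.rpow_pos_of_pos hr1 a).ne'
  have hempty : r ^ a * Real.exp (-(1/2) * P r) * (Z r - Y r) = 0 := hW0
  have := mul_eq_zero.1 hempty
  rcases this with h | h
  · exact absurd h (mul_ne_zero hra0 (Real.exp_ne_zero _))
  · linarith [sub_eq_zero.1 h]
end
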